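/- arXiv:2502.02815 — 3 statements merged into one kernel-verified Lean document; each statement's English description precedes it below -/
import Mathlib

section
/- Let agent i have a submodular valuation vᵢ in an n-agent fair division instance with entitlements wⱼ > 0 summing to 1. If allocation A satisfies the pairwise proportionality condition vᵢ(Aᵢ) ≥ (wᵢ/(wᵢ+wⱼ))·vᵢ(Aᵢ ∪ Aⱼ) for all j ≠ i, then vᵢ(Aᵢ) ≥ wᵢ·vᵢ(M), where M = A₁ ∪ … ∪ Aₙ. -/
/-- For a submodular valuation, pairwise proportionality implies proportionality. -/
theorem stmt8 {M : Type*} [Fintype M] [DecidableEq M] {n : ℕ}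
    (w : Fin n → ℝ) (hw : ∀ j, 0 < w j) (hwsum : ∑ j, w j = 1)
    (i : Fin n) (v : Finset M → ℝ) (hv0 : v ∅ = 0)
    (hsubmod : ∀ S T : Finset M, v (S ∪ T) + v (S ∩ T) ≤ v S + v T)
    (A : Fin n → Finset M)
    (hAdisj : ∀ j k, j ≠ k → Disjoint (A j) (A k))
    (hAcover : Finset.univ.biUnion A = Finset.univ)
    (hpprop : ∀ j, j ≠ i → (w i / (w i + w j)) * v (A i ∪ A j) ≤ v (A i)) :
    w i * v Finset.univ ≤ v (A i) := by
  have key : ∀ s : Finset (Fin n), i ∉ s →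
      v (A i ∪ s.biUnion A) ≤ v (A i) + ∑ j ∈ s, (v (A i ∪ A j) - v (A i)) := by
    intro s
    induction s using Finset.induction_on with
    | empty => simp
    | @insert j s hjs ih =>
      intro his
      have hine : i ∉ s := fun h => his (Finset.mem_insert_of_mem h)
      have hjne : j ≠ i := fun h => his (h ▸ Finset.mem_insert_self j s)
      have hST := hsubmod (A i ∪ s.biUnion A) (A i ∪ A j)
      have hdisj : Disjoint (s.biUnion A) (A j) := by
        apply Finset.disjoint_biUnion_left _ _ _ |>.mpr
        intro k hk
        exact hAdisj k j (fun h => hjs (h ▸ hk))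
      have hinter : (A i ∪ s.biUnion A) ∩ (A i ∪ A j) = A i := by
        rw [← Finset.union_inter_distrib_left, Finset.disjoint_iff_inter_eq_empty.mp hdisj,
          Finset.union_empty]
      have hunion : (A i ∪ s.biUnion A) ∪ (A i ∪ A j) = A i ∪ (insert j s).biUnion A := by
        rw [Finset.biUnion_insert]
        ext x
        simp only [Finset.mem_union]
        tauto
      rw [hinter, hunion] at hST
      rw [Finset.sum_insert hjs]
      have := ih hine
      linarith
  have hcov : A i ∪ (Finset.univ.erase i).biUnion A = (Finset.univ : Finset M) := by
    rw [← Finset.biUnion_insert, Finset.insert_erase (Finset.mem_univ i), hAcover]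
  have hine : i ∉ Finset.univ.erase i := Finset.notMem_erase i _
  have hkey := key (Finset.univ.erase i) hine
  rw [hcov] at hkey
  have hterm : ∀ j ∈ Finset.univ.erase i,
      w i * (v (A i ∪ A j) - v (A i)) ≤ w j * v (A i) := by
    intro j hj
    have hjne : j ≠ i := Finset.ne_of_mem_erase hj
    have hp := hpprop j hjne
    have hpos : 0 < w i + w j := by have := hw i; have := hw j; linarith
    rw [div_mul_eq_mul_div, div_le_iff₀ hpos] at hp
    nlinarith
  have hsum : ∑ j ∈ Finset.univ.erase i, w i * (v (A i ∪ A j) - v (A i)) ≤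
      ∑ j ∈ Finset.univ.erase i, w j * v (A i) := Finset.sum_le_sum hterm
  have hwrest : ∑ j ∈ Finset.univ.erase i, w j = 1 - w i := by
    have := Finset.add_sum_erase Finset.univ w (Finset.mem_univ i)
    linarith [hwsum ▸ this]
  have h1 : w i * v Finset.univ ≤
      w i * v (A i) + ∑ j ∈ Finset.univ.erase i, w i * (v (A i ∪ A j) - v (A i)) := by
    rw [← Finset.mul_sum]
    nlinarith [hw i]
  have h2 : ∑ j ∈ Finset.univ.erase i, w j * v (A i) = (1 - w i) * v (A i) := by
    rw [← Finset.sum_mul, hwrest]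
  linarith
end

section
/- Let v : 2^M → ℝ be additive with v({t}) ∈ {−1, 0, 1} for every item t, and let n ≥ 1, m = |M|. There exists an n-partition P of M such that |v(Pᵢ) − v(Pⱼ)| ≤ 1 for all i, j, and ⌊v(M)/n⌋ ≤ v(Pᵢ) ≤ ⌈v(M)/n⌉ for all i. -/
lemma count_mod (n : ℕ) (hn : 0 < n) (i : ℕ) (hi : i < n) (p : ℕ) :
    ((Finset.range p).filter (fun k => k % n = i)).card
      = p / n + if i < p % n then 1 else 0 := by
  induction p with
  | zero => simp
  | succ p ih =>
    have hmod : p % n < n := Nat.mod_lt _ hn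
    have e1 : p + 1 = n * (p / n) + (p % n + 1) := by
      have := Nat.div_add_mod p n; omega
    have hm : (p + 1) % n = (p % n + 1) % n := by
      conv_lhs => rw [e1]
      rw [Nat.mul_add_mod]
    have hd : (p + 1) / n = p / n + (p % n + 1) / n := by
      conv_lhs => rw [e1]
      rw [Nat.mul_add_div hn]
    have key : ((p+1) % n = 0 ∧ (p+1) / n = p / n + 1 ∧ p % n + 1 = n)
        ∨ ((p+1) % n = p % n + 1 ∧ (p+1) / n = p / n ∧ p % n + 1 < n) := by
      by_cases h : p % n + 1 = n
      · left
        refine ⟨by rw [hm, h, Nat.mod_self], by rw [hd, h, Nat.div_self hn], h⟩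
      · have h' : p % n + 1 < n := lt_of_le_of_ne hmod h
        right
        refine ⟨by rw [hm, Nat.mod_eq_of_lt h'], by rw [hd, Nat.div_eq_of_lt h']; simp, h'⟩
    rw [Finset.range_add_one, Finset.filter_insert]
    by_cases hpi : p % n = i
    · rw [if_pos hpi, Finset.card_insert_of_notMem (by simp), ih]
      rcases key with ⟨h1, h2, h3⟩ | ⟨h1, h2, h3⟩ <;> split_ifs <;> omega
    · rw [if_neg hpi, ih]
      rcases key with ⟨h1, h2, h3⟩ | ⟨h1, h2, h3⟩ <;> split_ifs <;> omega

lemma sum_pm {M : Type*} [DecidableEq M] (u : M → ℝ)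
    (hu : ∀ t, u t = -1 ∨ u t = 0 ∨ u t = 1) (s : Finset M) :
    ∑ t ∈ s, u t = ((s.filter (fun t => u t = 1)).card : ℝ)
      - ((s.filter (fun t => u t = -1)).card : ℝ) := by
  classical
  induction s using Finset.induction_on with
  | empty => simp
  | @insert a s ha ih =>
    rw [Finset.sum_insert ha, ih, Finset.filter_insert, Finset.filter_insert]
    rcases hu a with h1 | h1 | h1
    · rw [if_neg (by rw [h1]; norm_num), if_pos h1,
        Finset.card_insert_of_notMem (fun hm => ha (Finset.mem_filter.mp hm).1)]
      rw [h1]; push_cast; ring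
    · rw [if_neg (by rw [h1]; norm_num), if_neg (by rw [h1]; norm_num), h1]; ring
    · rw [if_pos h1, if_neg (by rw [h1]; norm_num),
        Finset.card_insert_of_notMem (fun hm => ha (Finset.mem_filter.mp hm).1)]
      rw [h1]; push_cast; ring

lemma card_filter_idx {M : Type*} [DecidableEq M] (s : Finset M) (pred : ℕ → Prop)
    [DecidablePred pred] :
    (s.filter (fun t => pred (if h : t ∈ s then ((s.equivFin ⟨t, h⟩ : Fin s.card) : ℕ) else 0))).card
      = ((Finset.range s.card).filter pred).card := by
  refine Finset.card_bij'
    (fun t ht => ((s.equivFin ⟨t, (Finset.mem_filter.mp ht).1⟩ : Fin s.card) : ℕ))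
    (fun k hk => ((s.equivFin.symm ⟨k, Finset.mem_range.mp (Finset.mem_filter.mp hk).1⟩ : {x // x ∈ s}) : M))
    ?_ ?_ ?_ ?_
  · intro t ht
    obtain ⟨h1, h2⟩ := Finset.mem_filter.mp ht
    rw [dif_pos h1] at h2
    simp only [Finset.mem_filter, Finset.mem_range]
    exact ⟨Fin.is_lt _, h2⟩
  · intro k hk
    obtain ⟨h1, h2⟩ := Finset.mem_filter.mp hk
    have hmem := (s.equivFin.symm ⟨k, Finset.mem_range.mp h1⟩).2
    refine Finset.mem_filter.mpr ⟨hmem, ?_⟩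
    rw [dif_pos hmem]
    simpa using h2
  · intro t ht
    simp
  · intro k hk
    simp

/-- For an additive valuation with singleton values in `{-1, 0, 1}`, there is an
`n`-partition whose bundles all have values within 1 of each other, each value
lying between `⌊v(M)/n⌋` and `⌈v(M)/n⌉`. -/
theorem stmt12 {M : Type*} [Fintype M] [DecidableEq M]
    (u : M → ℝ) (hu : ∀ t, u t = -1 ∨ u t = 0 ∨ u t = 1)
    (n : ℕ) (hn : 1 ≤ n) :
    ∃ P : Fin n → Finset M,
      (∀ i j, i ≠ j → Disjoint (P i) (P j)) ∧
      Finset.univ.biUnion P = Finset.univ ∧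
      (∀ i j, |(∑ t ∈ P i, u t) - ∑ t ∈ P j, u t| ≤ 1) ∧
      (∀ i, (⌊(∑ t : M, u t) / (n : ℝ)⌋ : ℝ) ≤ ∑ t ∈ P i, u t ∧
        ∑ t ∈ P i, u t ≤ (⌈(∑ t : M, u t) / (n : ℝ)⌉ : ℝ)) := by
  classical
  have hn0 : 0 < n := hn
  set pos : Finset M := Finset.univ.filter (fun t => u t = 1) with hpos
  set neg : Finset M := Finset.univ.filter (fun t => u t = -1) with hneg
  set idxp : M → ℕ :=
    fun t => if h : t ∈ pos then ((pos.equivFin ⟨t, h⟩ : Fin pos.card) : ℕ) else 0 with hidxp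
  set idxq : M → ℕ :=
    fun t => if h : t ∈ neg then ((neg.equivFin ⟨t, h⟩ : Fin neg.card) : ℕ) else 0 with hidxq
  set f : M → Fin n := fun t =>
    if t ∈ pos then ⟨idxp t % n, Nat.mod_lt _ hn0⟩
    else if t ∈ neg then ⟨idxq t % n, Nat.mod_lt _ hn0⟩
    else ⟨0, hn0⟩ with hf
  have hmempos : ∀ t, t ∈ pos ↔ u t = 1 := by intro t; simp [hpos]
  have hmemneg : ∀ t, t ∈ neg ↔ u t = -1 := by intro t; simp [hneg]
  set p := pos.card with hp
  set q := neg.card with hq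
  refine ⟨fun i => Finset.univ.filter (fun t => f t = i), ?_, ?_, ?_, ?_⟩
  · intro i j hij
    rw [Finset.disjoint_left]
    intro t ht1 ht2
    rw [Finset.mem_filter] at ht1 ht2
    exact hij (ht1.2 ▸ ht2.2)
  · ext t
    simp only [Finset.mem_biUnion, Finset.mem_univ, iff_true, Finset.mem_filter, true_and]
    exact ⟨f t, rfl⟩
  all_goals {
    have hval : ∀ i : Fin n, ∑ t ∈ Finset.univ.filter (fun t => f t = i), u t
        = ((p / n + if (i : ℕ) < p % n then 1 else 0 : ℕ) : ℝ)
          - ((q / n + if (i : ℕ) < q % n then 1 else 0 : ℕ) : ℝ) := by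
      intro i
      rw [sum_pm u hu]
      have e1 : (Finset.univ.filter (fun t => f t = i)).filter (fun t => u t = 1)
          = pos.filter (fun t => idxp t % n = (i : ℕ)) := by
        ext t
        simp only [Finset.mem_filter, Finset.mem_univ, true_and, hmempos]
        constructor
        · rintro ⟨hf1, hu1⟩
          refine ⟨hu1, ?_⟩
          have htp : t ∈ pos := (hmempos t).mpr hu1
          rw [hf] at hf1
          simp only [if_pos htp] at hf1
          rw [← hf1]
        · rintro ⟨hu1, hidx⟩
          have htp : t ∈ pos := (hmempos t).mpr hu1
          refine ⟨?_, hu1⟩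
          rw [hf]
          simp only [if_pos htp]
          exact Fin.ext hidx
      have e2 : (Finset.univ.filter (fun t => f t = i)).filter (fun t => u t = -1)
          = neg.filter (fun t => idxq t % n = (i : ℕ)) := by
        ext t
        simp only [Finset.mem_filter, Finset.mem_univ, true_and, hmemneg]
        constructor
        · rintro ⟨hf1, hu1⟩
          refine ⟨hu1, ?_⟩
          have htq : t ∈ neg := (hmemneg t).mpr hu1
          have htp : t ∉ pos := by
            rw [hmempos, hu1]; norm_num
          rw [hf] at hf1
          simp only [if_neg htp, if_pos htq] at hf1
          rw [← hf1]
        · rintro ⟨hu1, hidx⟩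
          have htq : t ∈ neg := (hmemneg t).mpr hu1
          have htp : t ∉ pos := by
            rw [hmempos, hu1]; norm_num
          refine ⟨?_, hu1⟩
          rw [hf]
          simp only [if_neg htp, if_pos htq]
          exact Fin.ext hidx
      rw [e1, e2, hidxp, hidxq]
      rw [card_filter_idx pos (fun k => k % n = (i : ℕ)),
        card_filter_idx neg (fun k => k % n = (i : ℕ)),
        count_mod n hn0 (i : ℕ) i.isLt p, count_mod n hn0 (i : ℕ) i.isLt q]
    have hS : ∑ t : M, u t = (p : ℝ) - (q : ℝ) := by
      rw [sum_pm u hu, ← hpos, ← hneg]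
    set dp := p / n with hdp
    set dq := q / n with hdq
    set a := p % n with haa
    set b := q % n with hbb
    have hpr : ((n : ℝ)) * (dp : ℝ) + (a : ℝ) = (p : ℝ) := by
      exact_mod_cast congrArg (Nat.cast : ℕ → ℝ) (Nat.div_add_mod p n)
    have hqr : ((n : ℝ)) * (dq : ℝ) + (b : ℝ) = (q : ℝ) := by
      exact_mod_cast congrArg (Nat.cast : ℕ → ℝ) (Nat.div_add_mod q n)
    have har : ((a : ℕ) : ℝ) < (n : ℝ) := by
      have : a < n := Nat.mod_lt _ hn0
      exact_mod_cast this
    have hbr : ((b : ℕ) : ℝ) < (n : ℝ) := by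
      have : b < n := Nat.mod_lt _ hn0
      exact_mod_cast this
    have ha0 : (0 : ℝ) ≤ ((a : ℕ) : ℝ) := Nat.cast_nonneg _
    have hb0 : (0 : ℝ) ≤ ((b : ℕ) : ℝ) := Nat.cast_nonneg _
    have hnr : (0 : ℝ) < (n : ℝ) := by exact_mod_cast hn0
    first
    | -- goal 3 : pairwise
      (intro i j
       rw [hval i, hval j]
       split_ifs <;>
         first
           | (exfalso; omega)
           | (rw [abs_le]; push_cast; constructor <;> linarith))
    | -- goal 4 : bounds
      (intro i
       rw [hval i, hS]
       have keyL : ∀ (y : ℝ) (z : ℤ), (z : ℝ) = y →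
           ((p : ℝ) - q) / n < z + 1 → ((⌊((p : ℝ) - q) / n⌋ : ℤ) : ℝ) ≤ y := by
         intro y z hzy h
         have : ⌊((p : ℝ) - q) / n⌋ ≤ z := Int.floor_le_iff.mpr (by exact_mod_cast h)
         rw [← hzy]
         exact_mod_cast this
       have keyR : ∀ (y : ℝ) (z : ℤ), (z : ℝ) = y →
           (z : ℝ) - 1 < ((p : ℝ) - q) / n → y ≤ ((⌈((p : ℝ) - q) / n⌉ : ℤ) : ℝ) := by
         intro y z hzy h
         have : z ≤ ⌈((p : ℝ) - q) / n⌉ := Int.le_ceil_iff.mpr (by exact_mod_cast h)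
         rw [← hzy]
         exact_mod_cast this
       have hdiv : ∀ y : ℝ, ((p : ℝ) - q) / n < y ↔ (p : ℝ) - q < y * n :=
         fun y => div_lt_iff₀ hnr
       have hdiv2 : ∀ y : ℝ, y < ((p : ℝ) - q) / n ↔ y * n < (p : ℝ) - q :=
         fun y => lt_div_iff₀ hnr
       split_ifs with h1 h2 h3
       · -- i < a, i < b
         refine ⟨keyL _ (((dp + 1 : ℕ) : ℤ) - ((dq + 1 : ℕ) : ℤ)) (by push_cast; ring) ?_,
           keyR _ (((dp + 1 : ℕ) : ℤ) - ((dq + 1 : ℕ) : ℤ)) (by push_cast; ring) ?_⟩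
         · rw [hdiv]; push_cast; linarith [hpr, hqr, har, hbr, ha0, hb0]
         · rw [hdiv2]; push_cast; linarith [hpr, hqr, har, hbr, ha0, hb0]
       · -- i < a, ¬ i < b : need b < a
         have hba : ((b : ℕ) : ℝ) < ((a : ℕ) : ℝ) := by
           have : b < a := by omega
           exact_mod_cast this
         refine ⟨keyL _ (((dp + 1 : ℕ) : ℤ) - ((dq : ℕ) : ℤ)) (by push_cast; ring) ?_,
           keyR _ (((dp + 1 : ℕ) : ℤ) - ((dq : ℕ) : ℤ)) (by push_cast; ring) ?_⟩
         · rw [hdiv]; push_cast; linarith [hpr, hqr, har, hbr, ha0, hb0]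
         · rw [hdiv2]; push_cast; linarith [hpr, hqr, har, hbr, hba]
       · -- ¬ i < a, i < b : need a < b
         have hab : ((a : ℕ) : ℝ) < ((b : ℕ) : ℝ) := by
           have : a < b := by omega
           exact_mod_cast this
         refine ⟨keyL _ (((dp : ℕ) : ℤ) - ((dq + 1 : ℕ) : ℤ)) (by push_cast; ring) ?_,
           keyR _ (((dp : ℕ) : ℤ) - ((dq + 1 : ℕ) : ℤ)) (by push_cast; ring) ?_⟩
         · rw [hdiv]; push_cast; linarith [hpr, hqr, har, hbr, hab]
         · rw [hdiv2]; push_cast; linarith [hpr, hqr, har, hbr, ha0, hb0]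
       · -- ¬ i < a, ¬ i < b
         refine ⟨keyL _ (((dp : ℕ) : ℤ) - ((dq : ℕ) : ℤ)) (by push_cast; ring) ?_,
           keyR _ (((dp : ℕ) : ℤ) - ((dq : ℕ) : ℤ)) (by push_cast; ring) ?_⟩
         · rw [hdiv]; push_cast; linarith [hpr, hqr, har, hbr, ha0, hb0]
         · rw [hdiv2]; push_cast; linarith [hpr, hqr, har, hbr, ha0, hb0])
  }
end

section
/- Let v : 2^M → ℝ be additive with v({t}) ∈ {−1, 0, 1} for every t ∈ M, and let n agents have equal entitlements. Then the maximin share of an agent with valuation v is ⌊v(M)/n⌋. -/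
open Finset

lemma succ_mod_div (n p : ℕ) (hn : 0 < n) :
    ((p+1) % n = p % n + 1 ∧ (p+1)/n = p/n ∧ p % n + 1 < n)
    ∨ ((p+1) % n = 0 ∧ (p+1)/n = p/n + 1 ∧ p % n + 1 = n) := by
  have hd := Nat.div_add_mod p n
  have hd1 := Nat.div_add_mod (p+1) n
  have hm := Nat.mod_lt p hn
  have hm1 := Nat.mod_lt (p+1) hn
  rcases Nat.lt_or_ge (p % n + 1) n with h | h
  · left
    have h1 : (p+1) % n = p % n + 1 := by
      rw [Nat.add_mod, Nat.one_mod_eq_one.mpr (by omega), Nat.mod_eq_of_lt h]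
    exact ⟨h1, Nat.eq_of_mul_eq_mul_left hn (by omega), h⟩
  · right
    have h1 : (p+1) % n = 0 := by
      by_cases hn1 : n = 1
      · subst hn1; exact Nat.mod_one _
      · rw [Nat.add_mod, Nat.one_mod_eq_one.mpr (by omega),
          (by omega : p % n + 1 = n), Nat.mod_self]
    have key : n * ((p+1)/n) = n * (p/n) + n := by omega
    have key2 : n * ((p+1)/n) = n * (p/n + 1) := by
      rw [Nat.mul_add, Nat.mul_one]; exact key
    exact ⟨h1, Nat.eq_of_mul_eq_mul_left hn key2, by omega⟩

lemma cnt_eq (n : ℕ) (hn : 0 < n) (j : ℕ) (hj : j < n) (p : ℕ) :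
    ((Finset.range p).filter (fun k => k % n = j)).card
      = p / n + if j < p % n then 1 else 0 := by
  induction p with
  | zero => simp [Nat.zero_mod]
  | succ p ih =>
      rw [Finset.range_add_one, Finset.filter_insert]
      have hm := Nat.mod_lt p hn
      by_cases hpj : p % n = j
      · rw [if_pos hpj, Finset.card_insert_of_notMem (by simp), ih]
        rcases succ_mod_div n p hn with ⟨h1, h2, h3⟩ | ⟨h1, h2, h3⟩ <;>
          rw [h1, h2] <;> split_ifs <;> omega
      · rw [if_neg hpj, ih]
        rcases succ_mod_div n p hn with ⟨h1, h2, h3⟩ | ⟨h1, h2, h3⟩ <;>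
          rw [h1, h2] <;> split_ifs <;> omega

lemma floor_cast_div (z : ℤ) (n : ℕ) : ⌊((z:ℝ))/(n:ℝ)⌋ = z / (n:ℤ) := by
  rw [show ((z:ℝ))/(n:ℝ) = ((z / n : ℚ) : ℝ) by push_cast; ring, Rat.floor_cast,
    Rat.floor_intCast_div_natCast]

lemma key_ineq (n p m j : ℕ) (hn : 0 < n) (hj : j < n) :
    ((p:ℤ) - m) / n ≤
      ((p/n + if j < p % n then 1 else 0 : ℕ) : ℤ)
        - ((m/n + if j < m % n then 1 else 0 : ℕ) : ℤ) := by
  have hdp := Nat.div_add_mod p n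
  have hdm := Nat.div_add_mod m n
  have hmp := Nat.mod_lt p hn
  have hmm := Nat.mod_lt m hn
  have hP : (p:ℤ) = (n:ℤ) * (p/n : ℕ) + (p % n : ℕ) := by exact_mod_cast hdp.symm
  have hM : (m:ℤ) = (n:ℤ) * (m/n : ℕ) + (m % n : ℕ) := by exact_mod_cast hdm.symm
  have hn0 : (n:ℤ) ≠ 0 := by exact_mod_cast hn.ne'
  have hsplit : (p:ℤ) - m = (((p % n : ℕ):ℤ) - ((m % n : ℕ):ℤ))
      + (((p/n : ℕ):ℤ) - ((m/n : ℕ):ℤ)) * n := by rw [hP, hM]; ring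
  rw [hsplit, Int.add_mul_ediv_right _ _ hn0]
  have hcase : (((p % n : ℕ):ℤ) - ((m % n : ℕ):ℤ)) / n
      = if (m % n : ℕ) ≤ (p % n : ℕ) then 0 else -1 := by
    split_ifs with h
    · apply Int.ediv_eq_zero_of_lt
      · omega
      · push_cast; omega
    · have : (((p % n : ℕ):ℤ) - ((m % n : ℕ):ℤ))
          = (((p % n : ℕ):ℤ) - ((m % n : ℕ):ℤ) + n) + (-1) * n := by ring
      rw [this, Int.add_mul_ediv_right _ _ hn0,
        Int.ediv_eq_zero_of_lt (by push_cast; omega) (by push_cast; omega)]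
      ring

  rw [hcase]
  push_cast
  split_ifs <;> omega

lemma card_filter_eq_cnt {M : Type*} [DecidableEq M] (s : Finset M) (n : ℕ) (hn : 0 < n)
    (f : M → Fin n) (e : s ≃ Fin s.card)
    (hf : ∀ t (h : t ∈ s), (f t).val = (e ⟨t, h⟩).val % n) (j : Fin n) :
    (s.filter (fun t => f t = j)).card
      = s.card / n + if j.val < s.card % n then 1 else 0 := by
  rw [← cnt_eq n hn j.val j.isLt s.card]
  refine Finset.card_bij'
    (i := fun t ht => ((e ⟨t, (Finset.mem_filter.mp ht).1⟩ : Fin s.card) : ℕ))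
    (j := fun k hk => ((e.symm ⟨k, Finset.mem_range.mp (Finset.mem_filter.mp hk).1⟩ : s) : M))
    ?_ ?_ ?_ ?_
  · intro t ht
    obtain ⟨h1, h2⟩ := Finset.mem_filter.mp ht
    refine Finset.mem_filter.mpr ⟨Finset.mem_range.mpr (e ⟨t, h1⟩).isLt, ?_⟩
    rw [← hf t h1, h2]
  · intro k hk
    obtain ⟨h1, h2⟩ := Finset.mem_filter.mp hk
    refine Finset.mem_filter.mpr ⟨(e.symm ⟨k, Finset.mem_range.mp h1⟩).2, ?_⟩
    apply Fin.ext
    rw [hf _ (e.symm ⟨k, Finset.mem_range.mp h1⟩).2]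
    simp only [Subtype.coe_eta, Equiv.apply_symm_apply]
    exact h2
  · intro t ht
    simp
  · intro k hk
    simp

lemma sum_w_eq {M : Type*} [DecidableEq M] (w : M → ℤ)
    (hw : ∀ t, w t = 1 ∨ w t = -1 ∨ w t = 0) (B : Finset M) :
    ∑ t ∈ B, w t = ((B.filter (fun t => w t = 1)).card : ℤ)
      - ((B.filter (fun t => w t = -1)).card : ℤ) := by
  rw [← Finset.sum_filter_add_sum_filter_not B (fun t => w t = 1)]
  have h1 : ∑ t ∈ B.filter (fun t => w t = 1), w t
      = ((B.filter (fun t => w t = 1)).card : ℤ) := by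
    rw [Finset.sum_congr rfl (fun t ht => (Finset.mem_filter.mp ht).2),
      Finset.sum_const, nsmul_eq_mul, mul_one]
  have heq : (B.filter (fun t => ¬ w t = 1)).filter (fun t => w t = -1)
      = B.filter (fun t => w t = -1) := by
    ext t
    simp only [Finset.mem_filter]
    constructor
    · rintro ⟨⟨h, _⟩, h2⟩; exact ⟨h, h2⟩
    · rintro ⟨h, h2⟩; exact ⟨⟨h, by omega⟩, h2⟩
  have h2 : ∑ t ∈ B.filter (fun t => ¬ w t = 1), w t
      = -((B.filter (fun t => w t = -1)).card : ℤ) := by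
    rw [← Finset.sum_filter_add_sum_filter_not (B.filter (fun t => ¬ w t = 1))
      (fun t => w t = -1), heq]
    have ha : ∑ t ∈ B.filter (fun t => w t = -1), w t
        = -((B.filter (fun t => w t = -1)).card : ℤ) := by
      rw [Finset.sum_congr rfl (fun t ht => (Finset.mem_filter.mp ht).2),
        Finset.sum_const, nsmul_eq_mul]
      ring
    have hb : ∑ t ∈ (B.filter (fun t => ¬ w t = 1)).filter (fun t => ¬ w t = -1), w t
        = 0 := by
      apply Finset.sum_eq_zero
      intro t ht
      obtain ⟨ht', hne2⟩ := Finset.mem_filter.mp ht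
      obtain ⟨_, hne1⟩ := Finset.mem_filter.mp ht'
      rcases hw t with h | h | h <;> omega
    rw [ha, hb, add_zero]
  rw [h1, h2]
  ring

lemma exists_good {M : Type*} [Fintype M] [DecidableEq M] (w : M → ℤ)
    (hw : ∀ t, w t = 1 ∨ w t = -1 ∨ w t = 0) (n : ℕ) (hn : 0 < n) :
    ∃ f : M → Fin n, ∀ j : Fin n,
      (∑ t : M, w t) / (n : ℤ)
        ≤ ∑ t ∈ Finset.univ.filter (fun t => f t = j), w t := by
  classical
  set Pos := Finset.univ.filter (fun t : M => w t = 1) with hPos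
  set Neg := Finset.univ.filter (fun t : M => w t = -1) with hNeg
  set ePos := Pos.equivFin
  set eNeg := Neg.equivFin
  set f : M → Fin n := fun t =>
    if h : t ∈ Pos then ⟨(ePos ⟨t, h⟩).val % n, Nat.mod_lt _ hn⟩
    else if h : t ∈ Neg then ⟨(eNeg ⟨t, h⟩).val % n, Nat.mod_lt _ hn⟩
    else ⟨0, hn⟩ with hf_def
  have hdisjPN : ∀ t, t ∈ Pos → t ∉ Neg := by
    intro t ht hn'
    have h1 := (Finset.mem_filter.mp ht).2
    have h2 := (Finset.mem_filter.mp hn').2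
    omega
  have hfPos : ∀ t (h : t ∈ Pos), (f t).val = (ePos ⟨t, h⟩).val % n := by
    intro t h; rw [hf_def]; simp only [dif_pos h]
  have hfNeg : ∀ t (h : t ∈ Neg), (f t).val = (eNeg ⟨t, h⟩).val % n := by
    intro t h
    have hnp : t ∉ Pos := fun hp => hdisjPN t hp h
    rw [hf_def]; simp only [dif_neg hnp, dif_pos h]
  refine ⟨f, fun j => ?_⟩
  have hBpos : (Finset.univ.filter (fun t => f t = j)).filter (fun t => w t = 1)
      = Pos.filter (fun t => f t = j) := by
    ext t
    simp only [Finset.mem_filter, Finset.mem_univ, true_and, hPos]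
    tauto
  have hBneg : (Finset.univ.filter (fun t => f t = j)).filter (fun t => w t = -1)
      = Neg.filter (fun t => f t = j) := by
    ext t
    simp only [Finset.mem_filter, Finset.mem_univ, true_and, hNeg]
    tauto
  have htot : ∑ t : M, w t = (Pos.card : ℤ) - (Neg.card : ℤ) := by
    rw [sum_w_eq w hw Finset.univ]
  rw [htot, sum_w_eq w hw (Finset.univ.filter (fun t => f t = j)), hBpos, hBneg,
    card_filter_eq_cnt Pos n hn f ePos hfPos j,
    card_filter_eq_cnt Neg n hn f eNeg hfNeg j]
  exact key_ineq n Pos.card Neg.card j.val hn j.isLt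

/-- For an additive valuation with singleton values in `{-1, 0, 1}` and `n`
equally entitled agents, the maximin share equals `⌊v(M)/n⌋`. -/
theorem stmt13 {M : Type*} [Fintype M] [DecidableEq M]
    (u : M → ℝ) (hu : ∀ t, u t = -1 ∨ u t = 0 ∨ u t = 1)
    (n : ℕ) (hn : 0 < n) :
    IsGreatest {x : ℝ | ∃ P : Fin n → Finset M,
        (∀ i j, i ≠ j → Disjoint (P i) (P j)) ∧
        Finset.univ.biUnion P = Finset.univ ∧
        x = Finset.univ.inf' ⟨⟨0, hn⟩, Finset.mem_univ _⟩ (fun j => ∑ t ∈ P j, u t)}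
      ((⌊(∑ t : M, u t) / (n : ℝ)⌋ : ℝ)) := by
  classical
  set w : M → ℤ := fun t => if u t = 1 then 1 else if u t = -1 then -1 else 0 with hw_def
  have hwc : ∀ t, ((w t : ℤ) : ℝ) = u t := by
    intro t
    rcases hu t with h | h | h <;> simp [hw_def, h] <;> norm_num
  have hw3 : ∀ t, w t = 1 ∨ w t = -1 ∨ w t = 0 := by
    intro t
    simp only [hw_def]
    split_ifs <;> simp
  have hsum : ∀ s : Finset M, ∑ t ∈ s, u t = ((∑ t ∈ s, w t : ℤ) : ℝ) := by
    intro s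
    push_cast
    exact Finset.sum_congr rfl fun t _ => (hwc t).symm
  set S : ℤ := ∑ t : M, w t with hS
  have hfloor : ⌊(∑ t : M, u t) / (n : ℝ)⌋ = S / (n : ℤ) := by
    rw [hsum Finset.univ]
    exact floor_cast_div S n
  -- upper bound
  have hub : ∀ x ∈ {x : ℝ | ∃ P : Fin n → Finset M,
      (∀ i j, i ≠ j → Disjoint (P i) (P j)) ∧
      Finset.univ.biUnion P = Finset.univ ∧
      x = Finset.univ.inf' ⟨⟨0, hn⟩, Finset.mem_univ _⟩ (fun j => ∑ t ∈ P j, u t)},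
      x ≤ ((⌊(∑ t : M, u t) / (n : ℝ)⌋ : ℝ)) := by
    rintro x ⟨P, hdisj, hcov, hx⟩
    obtain ⟨j0, -, hj0⟩ := Finset.exists_mem_eq_inf'
      (⟨⟨0, hn⟩, Finset.mem_univ _⟩ : Finset.univ.Nonempty) (fun j => ∑ t ∈ P j, u t)
    have hxle : ∀ j : Fin n, x ≤ ∑ t ∈ P j, u t := by
      intro j
      rw [hx]
      exact Finset.inf'_le _ (Finset.mem_univ j)
    have htot : ∑ j : Fin n, ∑ t ∈ P j, u t = ∑ t : M, u t := by
      rw [← Finset.sum_biUnion (fun i _ j _ hij => hdisj i j hij), hcov]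
    have hnx : (n : ℝ) * x ≤ ∑ t : M, u t := by
      calc (n : ℝ) * x = ∑ _j : Fin n, x := by
            rw [Finset.sum_const, Finset.card_univ, Fintype.card_fin, nsmul_eq_mul]
        _ ≤ ∑ j : Fin n, ∑ t ∈ P j, u t := Finset.sum_le_sum fun j _ => hxle j
        _ = ∑ t : M, u t := htot
    have hxz : x = ((∑ t ∈ P j0, w t : ℤ) : ℝ) := by
      rw [hx, hj0, hsum]
    have hxdiv : x ≤ (∑ t : M, u t) / (n : ℝ) := by
      rw [le_div_iff₀ (by exact_mod_cast hn)]
      linarith [hnx]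
    have : (∑ t ∈ P j0, w t : ℤ) ≤ ⌊(∑ t : M, u t) / (n : ℝ)⌋ :=
      Int.le_floor.mpr (by rw [← hxz]; exact hxdiv)
    rw [hxz]
    exact_mod_cast this
  constructor
  · obtain ⟨f, hf⟩ := exists_good w hw3 n hn
    refine ⟨fun j => Finset.univ.filter (fun t => f t = j), ?_, ?_, ?_⟩
    · intro i j hij
      rw [Finset.disjoint_left]
      intro t ht1 ht2
      exact hij ((Finset.mem_filter.mp ht1).2.symm.trans (Finset.mem_filter.mp ht2).2)
    · ext t
      simp only [Finset.mem_biUnion, Finset.mem_filter, Finset.mem_univ, true_and, iff_true]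
      exact ⟨f t, rfl⟩
    · apply le_antisymm
      swap
      · exact hub _ ⟨fun j => Finset.univ.filter (fun t => f t = j),
          (by
            intro i j hij
            rw [Finset.disjoint_left]
            intro t ht1 ht2
            exact hij ((Finset.mem_filter.mp ht1).2.symm.trans (Finset.mem_filter.mp ht2).2)),
          (by
            ext t
            simp only [Finset.mem_biUnion, Finset.mem_filter, Finset.mem_univ, true_and, iff_true]
            exact ⟨f t, rfl⟩), rfl⟩
      · apply Finset.le_inf'
        intro j _
        have h1 : ((⌊(∑ t : M, u t) / (n : ℝ)⌋ : ℤ) : ℝ)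
            ≤ ((∑ t ∈ Finset.univ.filter (fun t => f t = j), w t : ℤ) : ℝ) := by
          rw [hfloor]
          exact_mod_cast hf j
        exact h1.trans_eq (hsum _).symm
  · exact hub
end
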